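/- For every integer n ≥ 0 there exists a positive constant c_n such that for all x ∈ ℝ and all w > 0, |∂ⁿ/∂xⁿ ∂/∂w C(x,w)| ≤ c_n · w^{−(n+1)/2}, where C is the normalized Black-Scholes function. -/

import Mathlib

open MeasureTheory Real

/-- The standard normal cumulative distribution function. -/
noncomputable def stdNormalCDF (z : ℝ) : ℝ :=
  ∫ u in Set.Iic z, (Real.sqrt (2 * Real.pi))⁻¹ * Real.exp (-u ^ 2 / 2)

/-- The normalized Black-Scholes function `C(x,w) = e^x N(d₁) - N(d₂)`. -/
noncomputable def bsC (x w : ℝ) : ℝ :=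
  Real.exp x * stdNormalCDF (x / Real.sqrt w + Real.sqrt w / 2)
    - stdNormalCDF (x / Real.sqrt w + Real.sqrt w / 2 - Real.sqrt w)

noncomputable def gaussPDF (u : ℝ) : ℝ := (Real.sqrt (2 * Real.pi))⁻¹ * Real.exp (-u ^ 2 / 2)

lemma continuous_gaussPDF : Continuous gaussPDF := by
  unfold gaussPDF; fun_prop

lemma integrable_gaussPDF : Integrable gaussPDF := by
  have h := (integrable_exp_neg_mul_sq (by norm_num : (0:ℝ) < 1/2)).const_mul
    (Real.sqrt (2 * Real.pi))⁻¹
  have he : (fun u : ℝ => (Real.sqrt (2 * Real.pi))⁻¹ * Real.exp (-(1/2) * u ^ 2)) = gaussPDF := by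
    funext u; unfold gaussPDF; ring_nf
  rwa [he] at h

lemma hasDerivAt_stdNormalCDF (z : ℝ) : HasDerivAt stdNormalCDF (gaussPDF z) z := by
  have hint := integrable_gaussPDF
  have key : ∀ t : ℝ, stdNormalCDF t = stdNormalCDF 0 + ∫ u in (0:ℝ)..t, gaussPDF u := by
    intro t
    have h := intervalIntegral.integral_Iic_sub_Iic (hint.integrableOn) (hint.integrableOn) (a := (0:ℝ)) (b := t)
    unfold stdNormalCDF gaussPDF at *
    linarith [h]
  have hd : HasDerivAt (fun t => stdNormalCDF 0 + ∫ u in (0:ℝ)..t, gaussPDF u) (gaussPDF z) z :=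
    (intervalIntegral.integral_hasDerivAt_right (hint.intervalIntegrable)
      (continuous_gaussPDF.stronglyMeasurable.stronglyMeasurableAtFilter)
      continuous_gaussPDF.continuousAt).const_add _
  exact hd.congr_of_eventuallyEq (Filter.Eventually.of_forall key)

open Polynomial in
lemma gauss_poly_bound (p : Polynomial ℝ) :
    ∃ M : ℝ, 0 < M ∧ ∀ y : ℝ, |aeval y p| * Real.exp (-(y ^ 2 / 2)) ≤ M := by
  refine ⟨(∑ i ∈ Finset.range (p.natDegree + 1), |p.coeff i| * i.factorial) * Real.exp (1/2) + 1,
    by positivity, fun y => ?_⟩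
  have hg : 0 < Real.exp (-(y ^ 2 / 2)) := Real.exp_pos _
  have h1 : |aeval y p| ≤ ∑ i ∈ Finset.range (p.natDegree + 1), |p.coeff i| * |y| ^ i := by
    rw [show (aeval y p : ℝ) = p.eval y from by simp [aeval_def, eval₂_eq_eval_map]]
    rw [Polynomial.eval_eq_sum_range]
    refine (Finset.abs_sum_le_sum_abs _ _).trans (le_of_eq ?_)
    refine Finset.sum_congr rfl fun i _ => ?_
    rw [abs_mul, abs_pow]
  have h2 : ∀ i : ℕ, |y| ^ i * Real.exp (-(y ^ 2 / 2)) ≤ i.factorial * Real.exp (1/2) := by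
    intro i
    have hp : |y| ^ i ≤ i.factorial * Real.exp |y| := by
      have := Real.sum_le_exp_of_nonneg (abs_nonneg y) (i + 1)
      have hterm : |y| ^ i / i.factorial ≤ Real.exp |y| := by
        refine le_trans ?_ this
        refine Finset.single_le_sum (f := fun j => |y| ^ j / j.factorial) ?_ ?_
        · intro j _; positivity
        · exact Finset.self_mem_range_succ i
      calc |y| ^ i = (|y| ^ i / i.factorial) * i.factorial := by
            field_simp
        _ ≤ Real.exp |y| * i.factorial := by
            exact mul_le_mul_of_nonneg_right hterm (by positivity)
        _ = i.factorial * Real.exp |y| := by ring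
    calc |y| ^ i * Real.exp (-(y ^ 2 / 2))
        ≤ i.factorial * Real.exp |y| * Real.exp (-(y ^ 2 / 2)) :=
          mul_le_mul_of_nonneg_right hp hg.le
      _ = i.factorial * Real.exp (|y| - y ^ 2 / 2) := by
          rw [mul_assoc, ← Real.exp_add]; ring_nf
      _ ≤ i.factorial * Real.exp (1/2) := by
          refine mul_le_mul_of_nonneg_left (Real.exp_le_exp.mpr ?_) (by positivity)
          nlinarith [sq_nonneg (|y| - 1), sq_abs y]
  calc |aeval y p| * Real.exp (-(y ^ 2 / 2))
      ≤ (∑ i ∈ Finset.range (p.natDegree + 1), |p.coeff i| * |y| ^ i) * Real.exp (-(y ^ 2 / 2)) :=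
        mul_le_mul_of_nonneg_right h1 hg.le
    _ = ∑ i ∈ Finset.range (p.natDegree + 1), |p.coeff i| * (|y| ^ i * Real.exp (-(y ^ 2 / 2))) := by
        rw [Finset.sum_mul]; refine Finset.sum_congr rfl fun i _ => by ring
    _ ≤ ∑ i ∈ Finset.range (p.natDegree + 1), |p.coeff i| * (i.factorial * Real.exp (1/2)) := by
        refine Finset.sum_le_sum fun i _ => mul_le_mul_of_nonneg_left (h2 i) (abs_nonneg _)
    _ = (∑ i ∈ Finset.range (p.natDegree + 1), |p.coeff i| * i.factorial) * Real.exp (1/2) := by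
        rw [Finset.sum_mul]; refine Finset.sum_congr rfl fun i _ => by ring
    _ ≤ _ := by linarith

lemma hasDerivAt_bsC_w (x : ℝ) {w : ℝ} (hw : 0 < w) :
    HasDerivAt (fun w' => bsC x w')
      (gaussPDF (x / Real.sqrt w - Real.sqrt w / 2) / (2 * Real.sqrt w)) w := by
  have hs0 : 0 < Real.sqrt w := Real.sqrt_pos.mpr hw
  set s := Real.sqrt w with hs
  have hsq : HasDerivAt Real.sqrt (1 / (2 * s)) w := Real.hasDerivAt_sqrt hw.ne'
  have hinv : HasDerivAt (fun w' => x / Real.sqrt w') (x * (-(1 / (2 * s)) / s ^ 2)) w := by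
    have h := (hsq.inv hs0.ne').const_mul x
    simpa [div_eq_mul_inv] using h
  have hd1 : HasDerivAt (fun w' => x / Real.sqrt w' + Real.sqrt w' / 2)
      (x * (-(1 / (2 * s)) / s ^ 2) + (1 / (2 * s)) / 2) w := hinv.add (hsq.div_const 2)
  have hd2 : HasDerivAt (fun w' => x / Real.sqrt w' + Real.sqrt w' / 2 - Real.sqrt w')
      (x * (-(1 / (2 * s)) / s ^ 2) + (1 / (2 * s)) / 2 - 1 / (2 * s)) w := hd1.sub hsq
  have h1 := ((hasDerivAt_stdNormalCDF (x / s + s / 2)).comp w hd1).const_mul (Real.exp x)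
  have h2 := (hasDerivAt_stdNormalCDF (x / s + s / 2 - s)).comp w hd2
  have h := h1.sub h2
  have hkey : Real.exp x * gaussPDF (x / s + s / 2) = gaussPDF (x / s - s / 2) := by
    unfold gaussPDF
    rw [show Real.exp x * ((Real.sqrt (2 * Real.pi))⁻¹ * Real.exp (-(x / s + s / 2) ^ 2 / 2))
        = (Real.sqrt (2 * Real.pi))⁻¹ * (Real.exp x * Real.exp (-(x / s + s / 2) ^ 2 / 2)) from
        by ring, ← Real.exp_add]
    congr 1
    have hss : s ^ 2 = w := Real.sq_sqrt hw.le
    rw [Real.exp_eq_exp]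
    field_simp
    nlinarith [hss]
  refine h.congr_deriv ?_
  symm
  have : x / s + s / 2 - s = x / s - s / 2 := by ring
  rw [this]
  rw [show Real.exp x * (gaussPDF (x / s + s / 2) * (x * (-(1 / (2 * s)) / s ^ 2) + 1 / (2 * s) / 2))
      = (Real.exp x * gaussPDF (x / s + s / 2)) * (x * (-(1 / (2 * s)) / s ^ 2) + 1 / (2 * s) / 2)
      from by ring, hkey]
  field_simp
  ring

open Polynomial in
theorem bsC_mixed_derivative_bound (n : ℕ) :
    ∃ c : ℝ, 0 < c ∧ ∀ x w : ℝ, 0 < w →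
      |deriv^[n] (fun x' => deriv (fun w' => bsC x' w') w) x|
        ≤ c * w ^ (-((n : ℝ) + 1) / 2) := by
  obtain ⟨M, hM, hMle⟩ := gauss_poly_bound ((hermite n).map (algebraMap ℤ ℝ))
  have hMle' : ∀ y : ℝ, |(aeval y (hermite n) : ℝ)| * Real.exp (-(y ^ 2 / 2)) ≤ M := by
    intro y
    have := hMle y
    rwa [Polynomial.aeval_map_algebraMap] at this
  have h2pi : 0 < Real.sqrt (2 * Real.pi) := Real.sqrt_pos.mpr (by positivity)
  refine ⟨M * ((Real.sqrt (2 * Real.pi))⁻¹ / 2), by positivity, fun x w hw => ?_⟩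
  obtain ⟨s, hs0, hsw⟩ : ∃ s : ℝ, 0 < s ∧ Real.sqrt w = s :=
    ⟨Real.sqrt w, Real.sqrt_pos.mpr hw, rfl⟩
  set G : ℝ → ℝ := fun y => Real.exp (-(y ^ 2 / 2)) with hG
  have hF : (fun x' => deriv (fun w' => bsC x' w') w)
      = fun x' => (Real.sqrt (2 * Real.pi))⁻¹ * (2 * s)⁻¹ * G (s⁻¹ * x' + -(s / 2)) := by
    funext x'
    rw [(hasDerivAt_bsC_w x' hw).deriv, hsw]
    unfold gaussPDF
    rw [show s⁻¹ * x' + -(s / 2) = x' / s - s / 2 from by ring, hG]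
    rw [show -(x' / s - s / 2) ^ 2 / 2 = -((x' / s - s / 2) ^ 2 / 2) from by ring]
    ring
  rw [hF]
  have hGsmooth : ContDiff ℝ ⊤ G :=
    Real.contDiff_exp.comp (((contDiff_id.pow 2).div_const 2).neg)
  have hinner : ContDiff ℝ n fun z : ℝ => G (z + -(s / 2)) :=
    (hGsmooth.comp (contDiff_id.add contDiff_const)).of_le le_top
  have e0 : deriv^[n] (fun x' => (Real.sqrt (2 * Real.pi))⁻¹ * (2 * s)⁻¹
        * G (s⁻¹ * x' + -(s / 2))) x
      = iteratedDeriv n (fun x' => (Real.sqrt (2 * Real.pi))⁻¹ * (2 * s)⁻¹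
        * G (s⁻¹ * x' + -(s / 2))) x := by
    rw [iteratedDeriv_eq_iterate]
  rw [e0]
  have e1 : iteratedDeriv n (fun x' => (Real.sqrt (2 * Real.pi))⁻¹ * (2 * s)⁻¹
        * G (s⁻¹ * x' + -(s / 2))) x
      = (Real.sqrt (2 * Real.pi))⁻¹ * (2 * s)⁻¹
        * iteratedDeriv n (fun x' => G (s⁻¹ * x' + -(s / 2))) x := by
    rw [← iteratedDerivWithin_univ, ← iteratedDerivWithin_univ]
    refine iteratedDerivWithin_const_mul (Set.mem_univ x) uniqueDiffOn_univ _ ?_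
    exact ((hGsmooth.comp ((contDiff_const.mul contDiff_id).add
      contDiff_const)).of_le le_top).contDiffWithinAt
  have e2 : iteratedDeriv n (fun x' => G (s⁻¹ * x' + -(s / 2))) x
      = s⁻¹ ^ n * iteratedDeriv n (fun z => G (z + -(s / 2))) (s⁻¹ * x) := by
    simpa using congrFun (iteratedDeriv_comp_const_mul hinner s⁻¹) x
  have e3 : iteratedDeriv n (fun z => G (z + -(s / 2))) (s⁻¹ * x)
      = iteratedDeriv n G (s⁻¹ * x + -(s / 2)) :=
    congrFun (iteratedDeriv_comp_add_const n G (-(s / 2))) (s⁻¹ * x)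
  obtain ⟨y, hy⟩ : ∃ y : ℝ, s⁻¹ * x + -(s / 2) = y := ⟨_, rfl⟩
  have e4 : iteratedDeriv n G y
      = (-1 : ℝ) ^ n * aeval y (hermite n) * Real.exp (-(y ^ 2 / 2)) := by
    rw [hG, iteratedDeriv_eq_iterate]
    exact Polynomial.deriv_gaussian_eq_hermite_mul_gaussian n y
  rw [e1, e2, e3, hy, e4]
  have habsE : |Real.exp (-(y ^ 2 / 2))| = Real.exp (-(y ^ 2 / 2)) :=
    abs_of_nonneg (Real.exp_pos _).le
  have habs : |(Real.sqrt (2 * Real.pi))⁻¹ * (2 * s)⁻¹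
        * (s⁻¹ ^ n * ((-1 : ℝ) ^ n * aeval y (hermite n) * Real.exp (-(y ^ 2 / 2))))|
      = (Real.sqrt (2 * Real.pi))⁻¹ * (2 * s)⁻¹ * s⁻¹ ^ n
        * (|(aeval y (hermite n) : ℝ)| * Real.exp (-(y ^ 2 / 2))) := by
    simp only [abs_mul, abs_pow, abs_neg, abs_one, one_pow, one_mul, abs_inv, habsE,
      abs_of_nonneg (Real.sqrt_nonneg (2 * Real.pi)), abs_of_nonneg hs0.le, abs_two]
    ring
  rw [habs]
  have hkpos : 0 ≤ (Real.sqrt (2 * Real.pi))⁻¹ * (2 * s)⁻¹ * s⁻¹ ^ n := by positivity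
  have hle := mul_le_mul_of_nonneg_left (hMle' y) hkpos
  refine hle.trans (le_of_eq ?_)
  have hsr : s = w ^ ((1 : ℝ) / 2) := by rw [← hsw, Real.sqrt_eq_rpow]
  have hpow : s⁻¹ ^ n * s⁻¹ = w ^ (-((n : ℝ) + 1) / 2) := by
    rw [← pow_succ, inv_pow]
    rw [hsr, ← Real.rpow_natCast (w ^ ((1 : ℝ) / 2)) (n + 1), ← Real.rpow_mul hw.le,
      ← Real.rpow_neg hw.le]
    congr 1
    push_cast
    ring
  rw [show (Real.sqrt (2 * Real.pi))⁻¹ * (2 * s)⁻¹ * s⁻¹ ^ n * M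
      = M * ((Real.sqrt (2 * Real.pi))⁻¹ / 2) * (s⁻¹ ^ n * s⁻¹) from by rw [mul_inv]; ring, hpow]
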